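/- Let m be a positive integer with gcd(5,m)=1 and let b ∈ F_{2^{10m}} satisfy b^{10} + b^6 + b^5 + b^3 + b^2 + b + 1 = 0. Then the relative trace Tr from F_{2^{10m}} to F_{2^{2m}} satisfies Tr(b) = 0, i.e. b + b^{2^{2m}} + b^{2^{4m}} + b^{2^{6m}} + b^{2^{8m}} = 0. -/
import Mathlib

/-- If `gcd(5,m)=1` and `b ∈ F_{2^{10m}}` satisfies
`b^10 + b^6 + b^5 + b^3 + b^2 + b + 1 = 0`, then `Tr_{2m}^{10m}(b) = 0`. -/
theorem stmt_6 (m : ℕ) (hm : 0 < m) (h5 : Nat.gcd 5 m = 1)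
    (F : Type*) [Field F] [Fintype F] (hF : Fintype.card F = 2 ^ (10 * m))
    (b : F) (hb : b ^ 10 + b ^ 6 + b ^ 5 + b ^ 3 + b ^ 2 + b + 1 = 0) :
    b + b ^ (2 ^ (2 * m)) + b ^ (2 ^ (4 * m)) + b ^ (2 ^ (6 * m)) + b ^ (2 ^ (8 * m)) = 0 := by
  -- characteristic 2
  have hcard : ((2 : F)) ^ (10 * m) = 0 := by
    have := FiniteField.cast_card_eq_zero F
    rw [hF] at this
    push_cast at this
    exact this
  have htwo : (2 : F) = 0 := by
    have := pow_eq_zero_iff (n := 10 * m) (by positivity) |>.mp hcard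
    exact this
  -- powers of b under repeated squaring, reduced mod the minimal polynomial
  have h4 : b ^ 16 = b ^ 9 + b ^ 7 + b ^ 5 + b := by
    linear_combination (b ^ 6 + -1*b ^ 2 + -1*b) * hb + (-1*b ^ 9 + b ^ 4 + b ^ 3 + b ^ 2) * htwo
  have h5' : b ^ 32 = b ^ 7 + b ^ 5 + b := by
    linear_combination (b ^ 16 + b ^ 9 + b ^ 7 + b ^ 5 + b) * h4 + (b ^ 8 + 2*b ^ 6 + 2*b ^ 4 + -1*b ^ 3 + -3*b) * hb + (-2*b ^ 9 + -1*b ^ 7 + b ^ 6 + -1*b ^ 5 + b ^ 4 + 2*b ^ 3 + 2*b ^ 2 + b) * htwo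
  have h6 : b ^ 64 = b ^ 9 + b ^ 7 + b ^ 6 + b ^ 5 + b ^ 4 + b ^ 2 := by
    linear_combination (b ^ 32 + b ^ 7 + b ^ 5 + b) * h5' + (b ^ 4 + 2*b ^ 2) * hb + (-1*b ^ 9 + -2*b ^ 7 + -2*b ^ 5 + -2*b ^ 4 + -1*b ^ 3 + -1*b ^ 2) * htwo
  have h7 : b ^ 128 = b ^ 3 + b := by
    linear_combination (b ^ 64 + b ^ 9 + b ^ 7 + b ^ 6 + b ^ 5 + b ^ 4 + b ^ 2) * h6 + (b ^ 8 + 2*b ^ 6 + 2*b ^ 5 + 2*b ^ 4 + 3*b ^ 3 + b ^ 2 + b + -2) * hb + (-2*b ^ 9 + -3*b ^ 8 + -3*b ^ 7 + -3*b ^ 6 + -3*b ^ 5 + -3*b ^ 4 + -2*b ^ 3 + 1) * htwo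
  have h8 : b ^ 256 = b ^ 6 + b ^ 2 := by
    linear_combination (b ^ 128 + b ^ 3 + b) * h7 + (b ^ 4) * htwo
  have h9 : b ^ 512 = b ^ 8 + b ^ 7 + b ^ 5 + b ^ 3 + b ^ 2 := by
    linear_combination (b ^ 256 + b ^ 6 + b ^ 2) * h8 + (b ^ 2) * hb + (-1*b ^ 7 + -1*b ^ 5 + -1*b ^ 3 + -1*b ^ 2) * htwo
  have h10 : b ^ 1024 = b := by
    linear_combination (b ^ 512 + b ^ 8 + b ^ 7 + b ^ 5 + b ^ 3 + b ^ 2) * h9 + (b ^ 6 + 2*b ^ 5 + b ^ 4 + 2*b ^ 3 + b ^ 2 + -1*b + 2) * hb + (-1*b ^ 9 + -2*b ^ 8 + -1*b ^ 7 + -3*b ^ 6 + -3*b ^ 5 + -1*b ^ 4 + -2*b ^ 3 + -1*b ^ 2 + -1*b + -1) * htwo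
  -- the trace of b to F_4 vanishes
  have key : b + b ^ 4 + b ^ 16 + b ^ 64 + b ^ 256 = 0 := by
    linear_combination h4 + h6 + h8 + (b ^ 9 + b ^ 7 + b ^ 6 + b ^ 5 + b ^ 4 + b ^ 2 + b) * htwo
  -- periodicity of b ^ (2 ^ n)
  have hper : ∀ n : ℕ, b ^ (2 ^ (n + 10)) = b ^ (2 ^ n) := by
    intro n
    have : (2 : ℕ) ^ (n + 10) = 1024 * 2 ^ n := by ring
    rw [this, pow_mul, h10]
  have hmod : ∀ n : ℕ, b ^ (2 ^ n) = b ^ (2 ^ (n % 10)) := by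
    intro n
    induction n using Nat.strong_induction_on with
    | _ n ih =>
      rcases lt_or_ge n 10 with h | h
      · rw [Nat.mod_eq_of_lt h]
      · obtain ⟨k, rfl⟩ : ∃ k, n = k + 10 := ⟨n - 10, by omega⟩
        rw [hper k, ih k (by omega), Nat.add_mod_right]
  rw [hmod (2 * m), hmod (4 * m), hmod (6 * m), hmod (8 * m)]
  -- m is not divisible by 5
  have hm5 : m % 5 ≠ 0 := by
    intro h
    have hd : 5 ∣ m := Nat.dvd_of_mod_eq_zero h
    have : Nat.gcd 5 m = 5 := Nat.gcd_eq_left hd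
    omega
  have : m % 5 = 1 ∨ m % 5 = 2 ∨ m % 5 = 3 ∨ m % 5 = 4 := by omega
  rcases this with h | h | h | h
  · rw [show (2 * m) % 10 = 2 by omega, show (4 * m) % 10 = 4 by omega,
      show (6 * m) % 10 = 6 by omega, show (8 * m) % 10 = 8 by omega]
    linear_combination key
  · rw [show (2 * m) % 10 = 4 by omega, show (4 * m) % 10 = 8 by omega,
      show (6 * m) % 10 = 2 by omega, show (8 * m) % 10 = 6 by omega]
    linear_combination key
  · rw [show (2 * m) % 10 = 6 by omega, show (4 * m) % 10 = 2 by omega,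
      show (6 * m) % 10 = 8 by omega, show (8 * m) % 10 = 4 by omega]
    linear_combination key
  · rw [show (2 * m) % 10 = 8 by omega, show (4 * m) % 10 = 6 by omega,
      show (6 * m) % 10 = 4 by omega, show (8 * m) % 10 = 2 by omega]
    linear_combination key
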